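/- For $\overline{f}_i=\prod_{\ell\ne i}(x-\alpha_\ell)^{d_\ell}$ and any $k\ge 0$, the $k$-th derivative of $1/\overline{f}_i$ at $\alpha_i$ equals $(-1)^k k!\sum_{k_1+\cdots+\widehat{k_i}+\cdots+k_m=k}\prod_{\ell\ne i}\frac{\binom{d_\ell-1+k_\ell}{k_\ell}}{(\alpha_i-\alpha_\ell)^{d_\ell+k_\ell}}$. -/

import Mathlib

open Finset

/-- The tuples `(k_ℓ)_{ℓ ≠ i}` of nonnegative integers summing to `k`
(encoded as functions on `Fin m` vanishing at `i`). -/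
def holeTuples (m : ℕ) (i : Fin m) (k : ℕ) : Finset (Fin m → ℕ) :=
  (Fintype.piFinset fun _ : Fin m => Finset.range (k + 1)).filter
    fun κ => κ i = 0 ∧ ∑ ℓ, κ ℓ = k

lemma mem_holeTuples {m k : ℕ} {i : Fin m} {κ : Fin m → ℕ} :
    κ ∈ holeTuples m i k ↔ κ i = 0 ∧ ∑ ℓ, κ ℓ = k := by
  unfold holeTuples
  rw [Finset.mem_filter, and_iff_right_iff_imp]
  rintro ⟨h0, hs⟩
  rw [Fintype.mem_piFinset]
  intro ℓ
  rw [Finset.mem_range, Nat.lt_succ_iff, ← hs]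
  exact Finset.single_le_sum (fun _ _ => Nat.zero_le _) (Finset.mem_univ ℓ)

lemma holeTuples_zero {m : ℕ} (i : Fin m) : holeTuples m i 0 = {fun _ => 0} := by
  ext κ
  simp only [mem_holeTuples, Finset.mem_singleton, Finset.sum_eq_zero_iff, Finset.mem_univ,
    forall_true_left, funext_iff]
  constructor
  · rintro ⟨-, h⟩; exact h
  · intro h; exact ⟨h i, h⟩

lemma hasDerivAt_inv_pow_sub (a : ℝ) (n : ℕ) {x : ℝ} (hx : x ≠ a) :
    HasDerivAt (fun x : ℝ => ((x - a) ^ n)⁻¹) (-(n : ℝ) * ((x - a) ^ (n + 1))⁻¹) x := by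
  have hsub : x - a ≠ 0 := sub_ne_zero.mpr hx
  have h1 := hasDerivAt_zpow (-(n:ℤ)) (x - a) (Or.inl hsub)
  have h2 : HasDerivAt (fun x : ℝ => x - a) 1 x := (hasDerivAt_id x).sub_const a
  have h := h1.comp x h2
  simp only [mul_one, Function.comp_def] at h
  have hfun : (fun x : ℝ => ((x - a) ^ n)⁻¹) = fun x : ℝ => (x - a) ^ (-(n:ℤ)) := by
    funext y; rw [zpow_neg, zpow_natCast]
  rw [hfun]
  refine h.congr_deriv ?_
  rw [show (-(n:ℤ) - 1) = -((n + 1 : ℕ) : ℤ) by push_cast; ring, zpow_neg, zpow_natCast]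
  push_cast
  ring

/-- The summand `∏_{ℓ≠i} binom(d_ℓ-1+κ_ℓ, κ_ℓ) (x-α_ℓ)^{-(d_ℓ+κ_ℓ)}`. -/
noncomputable def Qfun {m : ℕ} (α : Fin m → ℝ) (d : Fin m → ℕ) (i : Fin m) (x : ℝ)
    (κ : Fin m → ℕ) : ℝ :=
  ∏ ℓ ∈ univ.erase i, (((d ℓ - 1 + κ ℓ).choose (κ ℓ) : ℝ) * ((x - α ℓ) ^ (d ℓ + κ ℓ))⁻¹)

lemma choose_id (d n : ℕ) (hd : 1 ≤ d) :
    (d + n) * (d - 1 + n).choose n = (n + 1) * (d + n).choose (n + 1) := by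
  obtain ⟨e, rfl⟩ := Nat.exists_eq_add_of_le hd
  have := Nat.add_one_mul_choose_eq (e + n) n
  rw [show 1 + e - 1 + n = e + n by omega, show 1 + e + n = e + n + 1 by omega, this,
    mul_comm]

lemma term_eq {m : ℕ} (α : Fin m → ℝ) (d : Fin m → ℕ) (hd : ∀ ℓ, 1 ≤ d ℓ) (i : Fin m)
    (x : ℝ) (κ : Fin m → ℕ) {j : Fin m} (hj : j ∈ univ.erase i) :
    (∏ ℓ ∈ (univ.erase i).erase j,
        (((d ℓ - 1 + κ ℓ).choose (κ ℓ) : ℝ) * ((x - α ℓ) ^ (d ℓ + κ ℓ))⁻¹))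
      * (((d j - 1 + κ j).choose (κ j) : ℝ) *
          (((d j + κ j : ℕ) : ℝ) * ((x - α j) ^ (d j + κ j + 1))⁻¹))
    = ((κ j + 1 : ℕ) : ℝ) * Qfun α d i x (Function.update κ j (κ j + 1)) := by
  have hQ : Qfun α d i x (Function.update κ j (κ j + 1))
      = (((d j - 1 + (κ j + 1)).choose (κ j + 1) : ℝ) * ((x - α j) ^ (d j + (κ j + 1)))⁻¹)
        * ∏ ℓ ∈ (univ.erase i).erase j,
            (((d ℓ - 1 + κ ℓ).choose (κ ℓ) : ℝ) * ((x - α ℓ) ^ (d ℓ + κ ℓ))⁻¹) := by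
    rw [Qfun, ← Finset.mul_prod_erase _ _ hj, Function.update_self]
    congr 1
    refine Finset.prod_congr rfl fun ℓ hℓ => ?_
    rw [Function.update_of_ne (Finset.mem_erase.mp hℓ).1]
  rw [hQ]
  have hc : ((d j + κ j : ℕ) : ℝ) * ((d j - 1 + κ j).choose (κ j) : ℝ)
      = ((κ j + 1 : ℕ) : ℝ) * ((d j - 1 + (κ j + 1)).choose (κ j + 1) : ℝ) := by
    rw [show d j - 1 + (κ j + 1) = d j + κ j by have := hd j; omega]
    rw [← Nat.cast_mul, ← Nat.cast_mul, choose_id _ _ (hd j)]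
  have hexp : d j + (κ j + 1) = d j + κ j + 1 := by omega
  rw [hexp]
  linear_combination ((∏ ℓ ∈ (univ.erase i).erase j,
      (((d ℓ - 1 + κ ℓ).choose (κ ℓ) : ℝ) * ((x - α ℓ) ^ (d ℓ + κ ℓ))⁻¹))
    * ((x - α j) ^ (d j + κ j + 1))⁻¹) * hc

lemma reindex {m : ℕ} (α : Fin m → ℝ) (d : Fin m → ℕ) (i : Fin m) (x : ℝ) (k : ℕ) :
    ∑ κ ∈ holeTuples m i k, ∑ j ∈ univ.erase i,
      ((κ j + 1 : ℕ) : ℝ) * Qfun α d i x (Function.update κ j (κ j + 1))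
    = ((k + 1 : ℕ) : ℝ) * ∑ κ ∈ holeTuples m i (k + 1), Qfun α d i x κ := by
  have hsum : ∀ κ ∈ holeTuples m i (k+1), ∑ j ∈ univ.erase i, κ j = k + 1 := by
    intro κ hκ
    obtain ⟨h0, hs⟩ := mem_holeTuples.mp hκ
    rw [← Finset.add_sum_erase _ _ (mem_univ i), h0, zero_add] at hs
    exact hs
  calc ∑ κ ∈ holeTuples m i k, ∑ j ∈ univ.erase i,
        ((κ j + 1 : ℕ) : ℝ) * Qfun α d i x (Function.update κ j (κ j + 1))
      = ∑ p ∈ (holeTuples m i k) ×ˢ (univ.erase i),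
          ((p.1 p.2 + 1 : ℕ) : ℝ) * Qfun α d i x (Function.update p.1 p.2 (p.1 p.2 + 1)) := by
        rw [Finset.sum_product]
    _ = ∑ p ∈ ((holeTuples m i (k+1)) ×ˢ (univ.erase i)).filter (fun p => p.1 p.2 ≠ 0),
          ((p.1 p.2 : ℕ) : ℝ) * Qfun α d i x p.1 := by
        refine Finset.sum_nbij' (fun p => (Function.update p.1 p.2 (p.1 p.2 + 1), p.2))
          (fun p => (Function.update p.1 p.2 (p.1 p.2 - 1), p.2)) ?_ ?_ ?_ ?_ ?_
        · rintro ⟨κ, j⟩ hp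
          rw [Finset.mem_product] at hp
          obtain ⟨hκ, hj⟩ := hp
          dsimp only at hκ hj ⊢
          obtain ⟨h0, hs⟩ := mem_holeTuples.mp hκ
          have hji : j ≠ i := (Finset.mem_erase.mp hj).1
          have h2 : ∑ ℓ, κ ℓ = κ j + ∑ ℓ ∈ univ.erase j, κ ℓ :=
            (Finset.add_sum_erase _ κ (mem_univ j)).symm
          rw [Finset.mem_filter, Finset.mem_product]
          dsimp only
          refine ⟨⟨mem_holeTuples.mpr ⟨?_, ?_⟩, hj⟩, ?_⟩
          · rw [Function.update_of_ne (Ne.symm hji), h0]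
          · rw [Finset.sum_update_of_mem (mem_univ j), ← Finset.erase_eq]
            omega
          · simp [Function.update_self]
        · rintro ⟨κ, j⟩ hp
          rw [Finset.mem_filter, Finset.mem_product] at hp
          obtain ⟨⟨hκ, hj⟩, hne⟩ := hp
          dsimp only at hκ hj hne ⊢
          obtain ⟨h0, hs⟩ := mem_holeTuples.mp hκ
          have hji : j ≠ i := (Finset.mem_erase.mp hj).1
          have hne' : κ j ≠ 0 := hne
          have h2 : ∑ ℓ, κ ℓ = κ j + ∑ ℓ ∈ univ.erase j, κ ℓ :=
            (Finset.add_sum_erase _ κ (mem_univ j)).symm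
          rw [Finset.mem_product]
          dsimp only
          refine ⟨mem_holeTuples.mpr ⟨?_, ?_⟩, hj⟩
          · rw [Function.update_of_ne (Ne.symm hji), h0]
          · rw [Finset.sum_update_of_mem (mem_univ j), ← Finset.erase_eq]
            omega
        · rintro ⟨κ, j⟩ hp
          simp only [Function.update_self, Nat.add_sub_cancel, Prod.mk.injEq]
          refine ⟨?_, trivial⟩
          funext ℓ
          rcases eq_or_ne ℓ j with rfl | h
          · simp
          · simp [Function.update_of_ne h]
        · rintro ⟨κ, j⟩ hp
          rw [Finset.mem_filter] at hp
          obtain ⟨-, hne⟩ := hp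
          have hne' : κ j ≠ 0 := hne
          simp only [Function.update_self, Prod.mk.injEq]
          refine ⟨?_, trivial⟩
          funext ℓ
          rcases eq_or_ne ℓ j with rfl | h
          · simp only [Function.update_self]
            omega
          · simp [Function.update_of_ne h]
        · rintro ⟨κ, j⟩ hp
          simp
    _ = ∑ p ∈ (holeTuples m i (k+1)) ×ˢ (univ.erase i),
          ((p.1 p.2 : ℕ) : ℝ) * Qfun α d i x p.1 := by
        refine Finset.sum_filter_of_ne ?_
        rintro ⟨κ, j⟩ hp hne h0
        apply hne
        rw [h0]
        simp
    _ = ∑ κ ∈ holeTuples m i (k+1), ∑ j ∈ univ.erase i, ((κ j : ℕ) : ℝ) * Qfun α d i x κ := by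
        rw [Finset.sum_product]
    _ = ((k + 1 : ℕ) : ℝ) * ∑ κ ∈ holeTuples m i (k + 1), Qfun α d i x κ := by
        rw [Finset.mul_sum]
        refine Finset.sum_congr rfl fun κ hκ => ?_
        rw [← Finset.sum_mul, ← Nat.cast_sum, hsum κ hκ]

lemma key {m : ℕ} (α : Fin m → ℝ) (d : Fin m → ℕ) (hd : ∀ ℓ, 1 ≤ d ℓ) (i : Fin m) (k : ℕ) :
    ∀ x : ℝ, (∀ ℓ, ℓ ≠ i → x ≠ α ℓ) →
    iteratedDeriv k (fun x : ℝ => (∏ ℓ ∈ Finset.univ.erase i, (x - α ℓ) ^ (d ℓ))⁻¹) x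
      = (-1 : ℝ) ^ k * (k.factorial : ℝ) * ∑ κ ∈ holeTuples m i k, Qfun α d i x κ := by
  induction k with
  | zero =>
    intro x hx
    rw [iteratedDeriv_zero, holeTuples_zero]
    simp only [Finset.sum_singleton, Qfun, pow_zero, one_mul, Nat.factorial_zero, Nat.cast_one,
      Nat.choose_zero_right, add_zero]
    rw [Finset.prod_inv_distrib]
  | succ k ih =>
    intro x hx
    rw [iteratedDeriv_succ]
    have hx' : x ∈ (↑((univ.erase i).image α) : Set ℝ)ᶜ := by
      simp only [Set.mem_compl_iff, Finset.coe_image, Set.mem_image, Finset.mem_coe,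
        Finset.mem_erase, not_exists]
      rintro ℓ ⟨⟨hℓ, -⟩, he⟩
      exact hx ℓ hℓ he.symm
    have hopen : IsOpen (↑((univ.erase i).image α) : Set ℝ)ᶜ :=
      ((univ.erase i).image α).finite_toSet.isClosed.isOpen_compl
    have hev : iteratedDeriv k (fun x : ℝ => (∏ ℓ ∈ Finset.univ.erase i, (x - α ℓ) ^ (d ℓ))⁻¹)
        =ᶠ[nhds x]
          fun y => (-1:ℝ)^k * (k.factorial : ℝ) * ∑ κ ∈ holeTuples m i k, Qfun α d i y κ := by
      filter_upwards [hopen.mem_nhds hx'] with y hy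
      refine ih y fun ℓ hℓ he => ?_
      apply hy
      simp only [Finset.coe_image, Set.mem_image, Finset.mem_coe, Finset.mem_erase]
      exact ⟨ℓ, ⟨hℓ, Finset.mem_univ ℓ⟩, he.symm⟩
    rw [hev.deriv_eq]
    have hQ : ∀ κ ∈ holeTuples m i k, HasDerivAt (fun y => Qfun α d i y κ)
        (∑ j ∈ univ.erase i, (∏ ℓ ∈ (univ.erase i).erase j,
            (((d ℓ - 1 + κ ℓ).choose (κ ℓ) : ℝ) * ((x - α ℓ) ^ (d ℓ + κ ℓ))⁻¹)) •
          (((d j - 1 + κ j).choose (κ j) : ℝ) *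
            (-((d j + κ j : ℕ) : ℝ) * ((x - α j) ^ (d j + κ j + 1))⁻¹))) x := by
      intro κ _
      unfold Qfun
      exact HasDerivAt.fun_finsetProd fun j hj =>
        (hasDerivAt_inv_pow_sub (α j) (d j + κ j)
          (hx j (Finset.mem_erase.mp hj).1)).const_mul _
    have hG := ((HasDerivAt.fun_sum hQ).const_mul ((-1:ℝ)^k * (k.factorial : ℝ))).deriv
    rw [hG]
    have hterm : ∀ κ ∈ holeTuples m i k,
        (∑ j ∈ univ.erase i, (∏ ℓ ∈ (univ.erase i).erase j,
            (((d ℓ - 1 + κ ℓ).choose (κ ℓ) : ℝ) * ((x - α ℓ) ^ (d ℓ + κ ℓ))⁻¹)) •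
          (((d j - 1 + κ j).choose (κ j) : ℝ) *
            (-((d j + κ j : ℕ) : ℝ) * ((x - α j) ^ (d j + κ j + 1))⁻¹)))
        = -∑ j ∈ univ.erase i,
            ((κ j + 1 : ℕ) : ℝ) * Qfun α d i x (Function.update κ j (κ j + 1)) := by
      intro κ _
      rw [← Finset.sum_neg_distrib]
      refine Finset.sum_congr rfl fun j hj => ?_
      rw [smul_eq_mul, ← term_eq α d hd i x κ hj]
      ring
    rw [Finset.sum_congr rfl hterm, Finset.sum_neg_distrib, reindex α d i x k,
      Nat.factorial_succ]
    push_cast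
    ring

/-- The `k`-th derivative of `1/f̄ᵢ`, where `f̄ᵢ(x) = ∏_{ℓ≠i} (x - α_ℓ)^{d_ℓ}`,
evaluated at `αᵢ`, equals
`(-1)^k k! ∑_{∑_{ℓ≠i} k_ℓ = k} ∏_{ℓ≠i} binom(d_ℓ-1+k_ℓ, k_ℓ)/(αᵢ-α_ℓ)^{d_ℓ+k_ℓ}`. -/
theorem iteratedDeriv_inv_fbar {m : ℕ} (α : Fin m → ℝ) (hα : Function.Injective α)
    (d : Fin m → ℕ) (hd : ∀ ℓ, 1 ≤ d ℓ) (i : Fin m) (k : ℕ) :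
    iteratedDeriv k (fun x : ℝ => (∏ ℓ ∈ Finset.univ.erase i, (x - α ℓ) ^ (d ℓ))⁻¹) (α i) =
      (-1 : ℝ) ^ k * (k.factorial : ℝ) *
        ∑ κ ∈ holeTuples m i k, ∏ ℓ ∈ Finset.univ.erase i,
          ((d ℓ - 1 + κ ℓ).choose (κ ℓ) : ℝ) / (α i - α ℓ) ^ (d ℓ + κ ℓ) := by
  rw [key α d hd i k (α i) fun ℓ hℓ he => hℓ (hα he).symm]
  simp only [Qfun, div_eq_mul_inv]
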